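/- In U(g)^{⊗4}: [[C_{13} − C_{24}, σ̂_{12}], σ̂_{34}] = 0 and [[C_{14} − C_{23}, σ̂_{12}], σ̂_{34}] = 0. -/

import Mathlib

open scoped TensorProduct

noncomputable section
set_option maxHeartbeats 2000000
set_option synthInstance.maxHeartbeats 400000

/-- `Σ i, u i ⊗ v i ⊗ 1 ⊗ 1` in `U(g)^{⊗4}`: factors in positions 1, 2. -/
def tensor4_12 (K : Type*) {L I : Type*} [Field K] [LieRing L] [LieAlgebra K L]
    [Fintype I] (u v : I → L) :
    UniversalEnvelopingAlgebra K L ⊗[K] (UniversalEnvelopingAlgebra K L ⊗[K]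
      (UniversalEnvelopingAlgebra K L ⊗[K] UniversalEnvelopingAlgebra K L)) :=
  ∑ i, UniversalEnvelopingAlgebra.ι K (u i) ⊗ₜ[K]
        (UniversalEnvelopingAlgebra.ι K (v i) ⊗ₜ[K]
          ((1 : UniversalEnvelopingAlgebra K L) ⊗ₜ[K] (1 : UniversalEnvelopingAlgebra K L)))

/-- `Σ i, u i ⊗ 1 ⊗ v i ⊗ 1`: factors in positions 1, 3. -/
def tensor4_13 (K : Type*) {L I : Type*} [Field K] [LieRing L] [LieAlgebra K L]
    [Fintype I] (u v : I → L) :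
    UniversalEnvelopingAlgebra K L ⊗[K] (UniversalEnvelopingAlgebra K L ⊗[K]
      (UniversalEnvelopingAlgebra K L ⊗[K] UniversalEnvelopingAlgebra K L)) :=
  ∑ i, UniversalEnvelopingAlgebra.ι K (u i) ⊗ₜ[K]
        ((1 : UniversalEnvelopingAlgebra K L) ⊗ₜ[K]
          (UniversalEnvelopingAlgebra.ι K (v i) ⊗ₜ[K] (1 : UniversalEnvelopingAlgebra K L)))

/-- `Σ i, u i ⊗ 1 ⊗ 1 ⊗ v i`: factors in positions 1, 4. -/
def tensor4_14 (K : Type*) {L I : Type*} [Field K] [LieRing L] [LieAlgebra K L]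
    [Fintype I] (u v : I → L) :
    UniversalEnvelopingAlgebra K L ⊗[K] (UniversalEnvelopingAlgebra K L ⊗[K]
      (UniversalEnvelopingAlgebra K L ⊗[K] UniversalEnvelopingAlgebra K L)) :=
  ∑ i, UniversalEnvelopingAlgebra.ι K (u i) ⊗ₜ[K]
        ((1 : UniversalEnvelopingAlgebra K L) ⊗ₜ[K]
          ((1 : UniversalEnvelopingAlgebra K L) ⊗ₜ[K] UniversalEnvelopingAlgebra.ι K (v i)))

/-- `Σ i, 1 ⊗ u i ⊗ v i ⊗ 1`: factors in positions 2, 3. -/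
def tensor4_23 (K : Type*) {L I : Type*} [Field K] [LieRing L] [LieAlgebra K L]
    [Fintype I] (u v : I → L) :
    UniversalEnvelopingAlgebra K L ⊗[K] (UniversalEnvelopingAlgebra K L ⊗[K]
      (UniversalEnvelopingAlgebra K L ⊗[K] UniversalEnvelopingAlgebra K L)) :=
  ∑ i, (1 : UniversalEnvelopingAlgebra K L) ⊗ₜ[K]
        (UniversalEnvelopingAlgebra.ι K (u i) ⊗ₜ[K]
          (UniversalEnvelopingAlgebra.ι K (v i) ⊗ₜ[K] (1 : UniversalEnvelopingAlgebra K L)))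

/-- `Σ i, 1 ⊗ u i ⊗ 1 ⊗ v i`: factors in positions 2, 4. -/
def tensor4_24 (K : Type*) {L I : Type*} [Field K] [LieRing L] [LieAlgebra K L]
    [Fintype I] (u v : I → L) :
    UniversalEnvelopingAlgebra K L ⊗[K] (UniversalEnvelopingAlgebra K L ⊗[K]
      (UniversalEnvelopingAlgebra K L ⊗[K] UniversalEnvelopingAlgebra K L)) :=
  ∑ i, (1 : UniversalEnvelopingAlgebra K L) ⊗ₜ[K]
        (UniversalEnvelopingAlgebra.ι K (u i) ⊗ₜ[K]
          ((1 : UniversalEnvelopingAlgebra K L) ⊗ₜ[K] UniversalEnvelopingAlgebra.ι K (v i)))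

/-- `Σ i, 1 ⊗ 1 ⊗ u i ⊗ v i`: factors in positions 3, 4. -/
def tensor4_34 (K : Type*) {L I : Type*} [Field K] [LieRing L] [LieAlgebra K L]
    [Fintype I] (u v : I → L) :
    UniversalEnvelopingAlgebra K L ⊗[K] (UniversalEnvelopingAlgebra K L ⊗[K]
      (UniversalEnvelopingAlgebra K L ⊗[K] UniversalEnvelopingAlgebra K L)) :=
  ∑ i, (1 : UniversalEnvelopingAlgebra K L) ⊗ₜ[K]
        ((1 : UniversalEnvelopingAlgebra K L) ⊗ₜ[K]
          (UniversalEnvelopingAlgebra.ι K (u i) ⊗ₜ[K] UniversalEnvelopingAlgebra.ι K (v i)))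




lemma sub_lie_gen {A : Type*} [NonUnitalNonAssocRing A] (x y z : A) :
    ⁅x - y, z⁆ = ⁅x, z⁆ - ⁅y, z⁆ := by
  simp only [Ring.lie_def, sub_mul, mul_sub]
  abel

lemma sum_lie_gen {A ι : Type*} [NonUnitalNonAssocRing A] (s : Finset ι) (f : ι → A) (y : A) :
    ⁅∑ i ∈ s, f i, y⁆ = ∑ i ∈ s, ⁅f i, y⁆ := by
  simp [Ring.lie_def, Finset.sum_mul, Finset.mul_sum, Finset.sum_sub_distrib]

lemma lie_sum_gen {A ι : Type*} [NonUnitalNonAssocRing A] (s : Finset ι) (x : A) (g : ι → A) :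
    ⁅x, ∑ i ∈ s, g i⁆ = ∑ i ∈ s, ⁅x, g i⁆ := by
  simp [Ring.lie_def, Finset.sum_mul, Finset.mul_sum, Finset.sum_sub_distrib]

section Shapes
variable {K A : Type*} [Field K] [Ring A] [Algebra K A]

lemma s13_12_gen (a a' b' c : A) :
    ⁅a ⊗ₜ[K] ((1:A) ⊗ₜ[K] (c ⊗ₜ[K] (1:A))), a' ⊗ₜ[K] (b' ⊗ₜ[K] ((1:A) ⊗ₜ[K] (1:A)))⁆
      = ⁅a, a'⁆ ⊗ₜ[K] (b' ⊗ₜ[K] (c ⊗ₜ[K] (1:A))) := by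
  simp [Ring.lie_def, Algebra.TensorProduct.tmul_mul_tmul, TensorProduct.sub_tmul,
    TensorProduct.tmul_sub]

lemma s24_12_gen (b d a' b' : A) :
    ⁅(1:A) ⊗ₜ[K] (b ⊗ₜ[K] ((1:A) ⊗ₜ[K] d)), a' ⊗ₜ[K] (b' ⊗ₜ[K] ((1:A) ⊗ₜ[K] (1:A)))⁆
      = a' ⊗ₜ[K] (⁅b, b'⁆ ⊗ₜ[K] ((1:A) ⊗ₜ[K] d)) := by
  simp [Ring.lie_def, Algebra.TensorProduct.tmul_mul_tmul, TensorProduct.sub_tmul,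
    TensorProduct.tmul_sub]

lemma s14_12_gen (a d a' b' : A) :
    ⁅a ⊗ₜ[K] ((1:A) ⊗ₜ[K] ((1:A) ⊗ₜ[K] d)), a' ⊗ₜ[K] (b' ⊗ₜ[K] ((1:A) ⊗ₜ[K] (1:A)))⁆
      = ⁅a, a'⁆ ⊗ₜ[K] (b' ⊗ₜ[K] ((1:A) ⊗ₜ[K] d)) := by
  simp [Ring.lie_def, Algebra.TensorProduct.tmul_mul_tmul, TensorProduct.sub_tmul,
    TensorProduct.tmul_sub]

lemma s23_12_gen (b c a' b' : A) :
    ⁅(1:A) ⊗ₜ[K] (b ⊗ₜ[K] (c ⊗ₜ[K] (1:A))), a' ⊗ₜ[K] (b' ⊗ₜ[K] ((1:A) ⊗ₜ[K] (1:A)))⁆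
      = a' ⊗ₜ[K] (⁅b, b'⁆ ⊗ₜ[K] (c ⊗ₜ[K] (1:A))) := by
  simp [Ring.lie_def, Algebra.TensorProduct.tmul_mul_tmul, TensorProduct.sub_tmul,
    TensorProduct.tmul_sub]

lemma sx3_34_gen (a b c c' d' : A) :
    ⁅a ⊗ₜ[K] (b ⊗ₜ[K] (c ⊗ₜ[K] (1:A))), (1:A) ⊗ₜ[K] ((1:A) ⊗ₜ[K] (c' ⊗ₜ[K] d'))⁆
      = a ⊗ₜ[K] (b ⊗ₜ[K] (⁅c, c'⁆ ⊗ₜ[K] d')) := by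
  simp [Ring.lie_def, Algebra.TensorProduct.tmul_mul_tmul, TensorProduct.sub_tmul,
    TensorProduct.tmul_sub]

lemma sx4_34_gen (a b d c' d' : A) :
    ⁅a ⊗ₜ[K] (b ⊗ₜ[K] ((1:A) ⊗ₜ[K] d)), (1:A) ⊗ₜ[K] ((1:A) ⊗ₜ[K] (c' ⊗ₜ[K] d'))⁆
      = a ⊗ₜ[K] (b ⊗ₜ[K] (c' ⊗ₜ[K] ⁅d, d'⁆)) := by
  simp [Ring.lie_def, Algebra.TensorProduct.tmul_mul_tmul, TensorProduct.sub_tmul,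
    TensorProduct.tmul_sub]

end Shapes


section UEASpec
variable {K L : Type*} [Field K] [LieRing L] [LieAlgebra K L]
local notation "UU" => UniversalEnvelopingAlgebra K L
local notation "TT4" => UniversalEnvelopingAlgebra K L ⊗[K] (UniversalEnvelopingAlgebra K L ⊗[K]
  (UniversalEnvelopingAlgebra K L ⊗[K] UniversalEnvelopingAlgebra K L))

lemma sub_lie'' (x y z : TT4) : ⁅x - y, z⁆ = ⁅x, z⁆ - ⁅y, z⁆ := sub_lie_gen x y z

lemma sum_lie' {ι : Type*} (s : Finset ι) (f : ι → TT4) (y : TT4) :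
    ⁅∑ i ∈ s, f i, y⁆ = ∑ i ∈ s, ⁅f i, y⁆ := sum_lie_gen s f y

lemma lie_sum' {ι : Type*} (s : Finset ι) (x : TT4) (g : ι → TT4) :
    ⁅x, ∑ i ∈ s, g i⁆ = ∑ i ∈ s, ⁅x, g i⁆ := lie_sum_gen s x g

lemma s13_12 (a a' b' c : UU) :
    ⁅a ⊗ₜ[K] ((1:UU) ⊗ₜ[K] (c ⊗ₜ[K] (1:UU))), a' ⊗ₜ[K] (b' ⊗ₜ[K] ((1:UU) ⊗ₜ[K] (1:UU)))⁆
      = ⁅a, a'⁆ ⊗ₜ[K] (b' ⊗ₜ[K] (c ⊗ₜ[K] (1:UU))) := s13_12_gen a a' b' c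

lemma s24_12 (b d a' b' : UU) :
    ⁅(1:UU) ⊗ₜ[K] (b ⊗ₜ[K] ((1:UU) ⊗ₜ[K] d)), a' ⊗ₜ[K] (b' ⊗ₜ[K] ((1:UU) ⊗ₜ[K] (1:UU)))⁆
      = a' ⊗ₜ[K] (⁅b, b'⁆ ⊗ₜ[K] ((1:UU) ⊗ₜ[K] d)) := s24_12_gen b d a' b'

lemma s14_12 (a d a' b' : UU) :
    ⁅a ⊗ₜ[K] ((1:UU) ⊗ₜ[K] ((1:UU) ⊗ₜ[K] d)), a' ⊗ₜ[K] (b' ⊗ₜ[K] ((1:UU) ⊗ₜ[K] (1:UU)))⁆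
      = ⁅a, a'⁆ ⊗ₜ[K] (b' ⊗ₜ[K] ((1:UU) ⊗ₜ[K] d)) := s14_12_gen a d a' b'

lemma s23_12 (b c a' b' : UU) :
    ⁅(1:UU) ⊗ₜ[K] (b ⊗ₜ[K] (c ⊗ₜ[K] (1:UU))), a' ⊗ₜ[K] (b' ⊗ₜ[K] ((1:UU) ⊗ₜ[K] (1:UU)))⁆
      = a' ⊗ₜ[K] (⁅b, b'⁆ ⊗ₜ[K] (c ⊗ₜ[K] (1:UU))) := s23_12_gen b c a' b'

lemma sx3_34 (a b c c' d' : UU) :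
    ⁅a ⊗ₜ[K] (b ⊗ₜ[K] (c ⊗ₜ[K] (1:UU))), (1:UU) ⊗ₜ[K] ((1:UU) ⊗ₜ[K] (c' ⊗ₜ[K] d'))⁆
      = a ⊗ₜ[K] (b ⊗ₜ[K] (⁅c, c'⁆ ⊗ₜ[K] d')) := sx3_34_gen a b c c' d'

lemma sx4_34 (a b d c' d' : UU) :
    ⁅a ⊗ₜ[K] (b ⊗ₜ[K] ((1:UU) ⊗ₜ[K] d)), (1:UU) ⊗ₜ[K] ((1:UU) ⊗ₜ[K] (c' ⊗ₜ[K] d'))⁆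
      = a ⊗ₜ[K] (b ⊗ₜ[K] (c' ⊗ₜ[K] ⁅d, d'⁆)) := sx4_34_gen a b d c' d'
end UEASpec

lemma contract {K L I M : Type*} [Field K] [AddCommGroup L] [Module K L]
    [AddCommGroup M] [Module K M] [Fintype I]
    (B : L →ₗ[K] L →ₗ[K] K) (e e' : I → L)
    (hx : ∀ x : L, x = ∑ j, B x (e' j) • e j)
    (hy : ∀ y : L, y = ∑ j, B (e j) y • e' j)
    (T : L → L → M)
    (h1 : ∀ y, IsLinearMap K fun x => T x y)
    (h2 : ∀ x, IsLinearMap K fun y => T x y)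
    (f g : L → L) (hfg : ∀ x y, B (f x) y = B x (g y)) :
    ∑ i, T (f (e i)) (e' i) = ∑ i, T (e i) (g (e' i)) := by
  have l1 : ∀ i, T (f (e i)) (e' i) = ∑ j, B (e i) (g (e' j)) • T (e j) (e' i) := by
    intro i
    have : T (f (e i)) (e' i)
        = (IsLinearMap.mk' _ (h1 (e' i))) (∑ j, B (f (e i)) (e' j) • e j) := by
      rw [← hx (f (e i))]; rfl
    rw [this, map_sum]
    refine Finset.sum_congr rfl fun j _ => ?_
    rw [map_smul, hfg]
    rfl
  have l2 : ∀ i, T (e i) (g (e' i)) = ∑ j, B (e j) (g (e' i)) • T (e i) (e' j) := by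
    intro i
    have : T (e i) (g (e' i))
        = (IsLinearMap.mk' _ (h2 (e i))) (∑ j, B (e j) (g (e' i)) • e' j) := by
      rw [← hy (g (e' i))]; rfl
    rw [this, map_sum]
    refine Finset.sum_congr rfl fun j _ => ?_
    rw [map_smul]
    rfl
  calc ∑ i, T (f (e i)) (e' i) = ∑ i, ∑ j, B (e i) (g (e' j)) • T (e j) (e' i) :=
        Finset.sum_congr rfl fun i _ => l1 i
    _ = ∑ j, ∑ i, B (e i) (g (e' j)) • T (e j) (e' i) := Finset.sum_comm
    _ = ∑ i, T (e i) (g (e' i)) := (Finset.sum_congr rfl fun j _ => (l2 j).symm)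

lemma contract3 {K L I M : Type*} [Field K] [AddCommGroup L] [Module K L]
    [AddCommGroup M] [Module K M] [Fintype I]
    (B : L →ₗ[K] L →ₗ[K] K) (e e' : I → L)
    (hx : ∀ x : L, x = ∑ j, B x (e' j) • e j)
    (hy : ∀ y : L, y = ∑ j, B (e j) y • e' j)
    (T : I → I → L → L → M)
    (h1 : ∀ a b y, IsLinearMap K fun x => T a b x y)
    (h2 : ∀ a b x, IsLinearMap K fun y => T a b x y)
    (f g : I → I → L → L)
    (hfg : ∀ a b x y, B (f a b x) y = B x (g a b y)) :
    ∑ a, ∑ b, ∑ i, T a b (f a b (e i)) (e' i)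
      = ∑ a, ∑ b, ∑ i, T a b (e i) (g a b (e' i)) :=
  Finset.sum_congr rfl fun a _ => Finset.sum_congr rfl fun b _ =>
    contract B e e' hx hy (T a b) (h1 a b) (h2 a b) (f a b) (g a b) (hfg a b)

lemma sum3_rot {I M : Type*} [Fintype I] [AddCommMonoid M] (F : I → I → I → M) :
    ∑ i, ∑ j, ∑ k, F i j k = ∑ j, ∑ k, ∑ i, F i j k := by
  rw [Finset.sum_comm]
  exact Finset.sum_congr rfl fun j _ => Finset.sum_comm

lemma sum3_swap23 {I M : Type*} [Fintype I] [AddCommMonoid M] (F : I → I → I → M) :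
    ∑ i, ∑ j, ∑ k, F i j k = ∑ i, ∑ k, ∑ j, F i j k :=
  Finset.sum_congr rfl fun _ _ => Finset.sum_comm

section Lin
variable {K L : Type*} [Field K] [AddCommGroup L] [Module K L]

lemma lin_slot1 (c2 c3 c4 : L) :
    IsLinearMap K fun x : L => x ⊗ₜ[K] (c2 ⊗ₜ[K] (c3 ⊗ₜ[K] c4)) :=
  ⟨fun u v => by simp [TensorProduct.add_tmul],
   fun c u => by simp [TensorProduct.smul_tmul']⟩

lemma lin_slot2 (c1 c3 c4 : L) :
    IsLinearMap K fun x : L => c1 ⊗ₜ[K] (x ⊗ₜ[K] (c3 ⊗ₜ[K] c4)) :=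
  ⟨fun u v => by simp [TensorProduct.add_tmul, TensorProduct.tmul_add],
   fun c u => by simp only [← TensorProduct.smul_tmul', TensorProduct.tmul_smul]⟩

lemma lin_slot3 (c1 c2 c4 : L) :
    IsLinearMap K fun x : L => c1 ⊗ₜ[K] (c2 ⊗ₜ[K] (x ⊗ₜ[K] c4)) :=
  ⟨fun u v => by simp [TensorProduct.add_tmul, TensorProduct.tmul_add],
   fun c u => by simp only [← TensorProduct.smul_tmul', TensorProduct.tmul_smul]⟩

lemma lin_slot4 (c1 c2 c3 : L) :
    IsLinearMap K fun x : L => c1 ⊗ₜ[K] (c2 ⊗ₜ[K] (c3 ⊗ₜ[K] x)) :=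
  ⟨fun u v => by simp [TensorProduct.tmul_add],
   fun c u => by simp [TensorProduct.tmul_smul]⟩

lemma IsLinearMap.comp' {M N P : Type*} [AddCommGroup M] [Module K M]
    [AddCommGroup N] [Module K N] [AddCommGroup P] [Module K P]
    {f : N → P} {g : M → N} (hf : IsLinearMap K f) (hg : IsLinearMap K g) :
    IsLinearMap K (f ∘ g) :=
  ⟨fun u v => by simp [hg.map_add, hf.map_add], fun c u => by simp [hg.map_smul, hf.map_smul]⟩

end Lin


section Key
variable {K L I : Type*} [Field K] [LieRing L] [LieAlgebra K L] [Fintype I]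

lemma lin_lie_right (a : L) : IsLinearMap K fun y : L => ⁅a, y⁆ :=
  ⟨fun u v => lie_add a u v, fun c u => lie_smul c a u⟩

lemma lin_lie_left (a : L) : IsLinearMap K fun y : L => ⁅y, a⁆ :=
  ⟨fun u v => add_lie u v a, fun c u => smul_lie c u a⟩

lemma lin_sigma (σ : L →ₗ[K] L) : IsLinearMap K fun y : L => σ y :=
  ⟨σ.map_add, σ.map_smul⟩


lemma lin_slot4_comp {F : L → L} (hF : IsLinearMap K F) (c1 c2 c3 : L) :
    IsLinearMap K fun y : L => c1 ⊗ₜ[K] (c2 ⊗ₜ[K] (c3 ⊗ₜ[K] F y)) :=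
  ⟨fun u v => by rw [hF.map_add, TensorProduct.tmul_add, TensorProduct.tmul_add,
      TensorProduct.tmul_add],
   fun c u => by rw [hF.map_smul, TensorProduct.tmul_smul, TensorProduct.tmul_smul,
      TensorProduct.tmul_smul]⟩

lemma lin_slot3_comp {F : L → L} (hF : IsLinearMap K F) (c1 c2 c4 : L) :
    IsLinearMap K fun y : L => c1 ⊗ₜ[K] (c2 ⊗ₜ[K] (F y ⊗ₜ[K] c4)) :=
  ⟨fun u v => by rw [hF.map_add, TensorProduct.add_tmul, TensorProduct.tmul_add,
      TensorProduct.tmul_add],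
   fun c u => by simp only [hF.map_smul, ← TensorProduct.smul_tmul', TensorProduct.tmul_smul]⟩

lemma lin_sigR (σ : L →ₗ[K] L) (a : L) : IsLinearMap K fun y : L => ⁅a, σ y⁆ :=
  ⟨fun u v => by rw [map_add, lie_add], fun c u => by rw [map_smul, lie_smul]⟩

lemma lin_lieL2 (a b : L) : IsLinearMap K fun y : L => ⁅⁅y, a⁆, b⁆ :=
  ⟨fun u v => by rw [add_lie, add_lie], fun c u => by rw [smul_lie, smul_lie]⟩

lemma lin_mix (σ : L →ₗ[K] L) (a b : L) : IsLinearMap K fun y : L => ⁅a, σ ⁅y, b⁆⁆ :=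
  ⟨fun u v => by rw [add_lie, map_add, lie_add], fun c u => by rw [smul_lie, map_smul, lie_smul]⟩

lemma key1 (B : L →ₗ[K] L →ₗ[K] K) (e e' : I → L)
    (hx : ∀ x : L, x = ∑ j, B x (e' j) • e j)
    (hy : ∀ y : L, y = ∑ j, B (e j) y • e' j)
    (σ : L →ₗ[K] L)
    (hσinv : ∀ x, σ (σ x) = x)
    (hσlie : ∀ x y, σ ⁅x, y⁆ = ⁅σ x, σ y⁆)
    (hBinv : ∀ x y z, B ⁅x, y⁆ z = B x ⁅y, z⁆)
    (hadjσ : ∀ x y, B (σ x) y = B x (σ y))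
    (hadj2 : ∀ u x y, B ⁅u, σ x⁆ y = B x ⁅σ y, σ u⁆)
    (hadj3 : ∀ u x y, B ⁅σ u, σ x⁆ y = B x (-⁅u, σ y⁆)) :
    ∑ i, ∑ j, ∑ k, (⁅e i, σ (e j)⁆ ⊗ₜ[K] ((e' j) ⊗ₜ[K] (⁅e' i, σ (e k)⁆ ⊗ₜ[K] (e' k))))
      = ∑ i, ∑ j, ∑ k,
        ((σ (e j)) ⊗ₜ[K] (⁅e i, e' j⁆ ⊗ₜ[K] ((σ (e k)) ⊗ₜ[K] ⁅e' i, e' k⁆))) := by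
  have hA : ∑ i, ∑ j, ∑ k,
        (⁅e i, σ (e j)⁆ ⊗ₜ[K] ((e' j) ⊗ₜ[K] (⁅e' i, σ (e k)⁆ ⊗ₜ[K] (e' k))))
      = ∑ i, ∑ j, ∑ k,
        ((e j) ⊗ₜ[K] ((e i) ⊗ₜ[K] ((e k) ⊗ₜ[K] ⁅⁅σ (e' j), e' i⁆, σ (e' k)⁆))) := by
    calc ∑ i, ∑ j, ∑ k,
          (⁅e i, σ (e j)⁆ ⊗ₜ[K] ((e' j) ⊗ₜ[K] (⁅e' i, σ (e k)⁆ ⊗ₜ[K] (e' k))))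
        = ∑ i, ∑ k, ∑ j,
          (⁅e i, σ (e j)⁆ ⊗ₜ[K] ((e' j) ⊗ₜ[K] (⁅e' i, σ (e k)⁆ ⊗ₜ[K] (e' k)))) :=
        sum3_swap23 _
      _ = ∑ i, ∑ k, ∑ j,
          ((e j) ⊗ₜ[K] (⁅σ (e' j), σ (e i)⁆ ⊗ₜ[K] (⁅e' i, σ (e k)⁆ ⊗ₜ[K] (e' k)))) := by
        exact contract3 B e e' hx hy
          (fun a b x y => x ⊗ₜ[K] (y ⊗ₜ[K] (⁅e' a, σ (e b)⁆ ⊗ₜ[K] (e' b))))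
          (fun a b y => lin_slot1 _ _ _) (fun a b x => lin_slot2 _ _ _)
          (fun a b x => ⁅e a, σ x⁆) (fun a b y => ⁅σ y, σ (e a)⁆)
          (fun a b x y => hadj2 (e a) x y)
      _ = ∑ i, ∑ j, ∑ k,
          ((e j) ⊗ₜ[K] (⁅σ (e' j), σ (e i)⁆ ⊗ₜ[K] (⁅e' i, σ (e k)⁆ ⊗ₜ[K] (e' k)))) :=
        sum3_swap23 (fun a b c =>
          ((e c) ⊗ₜ[K] (⁅σ (e' c), σ (e a)⁆ ⊗ₜ[K] (⁅e' a, σ (e b)⁆ ⊗ₜ[K] (e' b)))))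
      _ = ∑ i, ∑ j, ∑ k,
          ((e j) ⊗ₜ[K] (⁅σ (e' j), σ (e i)⁆ ⊗ₜ[K] ((e k) ⊗ₜ[K] ⁅σ (e' k), σ (e' i)⁆))) := by
        exact contract3 B e e' hx hy
          (fun a b x y => (e b) ⊗ₜ[K] (⁅σ (e' b), σ (e a)⁆ ⊗ₜ[K] (x ⊗ₜ[K] y)))
          (fun a b y => lin_slot3 _ _ _) (fun a b x => lin_slot4 _ _ _)
          (fun a b x => ⁅e' a, σ x⁆) (fun a b y => ⁅σ y, σ (e' a)⁆)
          (fun a b x y => hadj2 (e' a) x y)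
      _ = ∑ j, ∑ k, ∑ i,
          ((e j) ⊗ₜ[K] (⁅σ (e' j), σ (e i)⁆ ⊗ₜ[K] ((e k) ⊗ₜ[K] ⁅σ (e' k), σ (e' i)⁆))) :=
        sum3_rot _
      _ = ∑ j, ∑ k, ∑ i,
          ((e j) ⊗ₜ[K] ((e i) ⊗ₜ[K] ((e k) ⊗ₜ[K] ⁅σ (e' k), σ (-⁅e' j, σ (e' i)⁆)⁆))) := by
        exact contract3 B e e' hx hy
          (fun a b x y => (e a) ⊗ₜ[K] (x ⊗ₜ[K] ((e b) ⊗ₜ[K] ⁅σ (e' b), σ y⁆)))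
          (fun a b y => lin_slot2 _ _ _)
          (fun a b x => lin_slot4_comp (lin_sigR σ (σ (e' b))) _ _ _)
          (fun a b x => ⁅σ (e' a), σ x⁆) (fun a b y => -⁅e' a, σ y⁆)
          (fun a b x y => hadj3 (e' a) x y)
      _ = ∑ i, ∑ j, ∑ k,
          ((e j) ⊗ₜ[K] ((e i) ⊗ₜ[K] ((e k) ⊗ₜ[K] ⁅σ (e' k), σ (-⁅e' j, σ (e' i)⁆)⁆))) :=
        (sum3_rot (fun i j k =>
          ((e j) ⊗ₜ[K] ((e i) ⊗ₜ[K] ((e k) ⊗ₜ[K] ⁅σ (e' k), σ (-⁅e' j, σ (e' i)⁆)⁆))))).symm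
      _ = ∑ i, ∑ j, ∑ k,
          ((e j) ⊗ₜ[K] ((e i) ⊗ₜ[K] ((e k) ⊗ₜ[K] ⁅⁅σ (e' j), e' i⁆, σ (e' k)⁆))) := by
        refine Finset.sum_congr rfl fun i _ => Finset.sum_congr rfl fun j _ =>
          Finset.sum_congr rfl fun k _ => ?_
        rw [map_neg, hσlie, hσinv, lie_neg, lie_skew]
  have hB : ∑ i, ∑ j, ∑ k,
        ((σ (e j)) ⊗ₜ[K] (⁅e i, e' j⁆ ⊗ₜ[K] ((σ (e k)) ⊗ₜ[K] ⁅e' i, e' k⁆)))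
      = ∑ i, ∑ j, ∑ k,
        ((e j) ⊗ₜ[K] ((e i) ⊗ₜ[K] ((e k) ⊗ₜ[K] ⁅⁅σ (e' j), e' i⁆, σ (e' k)⁆))) := by
    calc ∑ i, ∑ j, ∑ k,
          ((σ (e j)) ⊗ₜ[K] (⁅e i, e' j⁆ ⊗ₜ[K] ((σ (e k)) ⊗ₜ[K] ⁅e' i, e' k⁆)))
        = ∑ j, ∑ k, ∑ i,
          ((σ (e j)) ⊗ₜ[K] (⁅e i, e' j⁆ ⊗ₜ[K] ((σ (e k)) ⊗ₜ[K] ⁅e' i, e' k⁆))) :=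
        sum3_rot _
      _ = ∑ j, ∑ k, ∑ i,
          ((σ (e j)) ⊗ₜ[K] ((e i) ⊗ₜ[K] ((σ (e k)) ⊗ₜ[K] ⁅⁅e' j, e' i⁆, e' k⁆))) := by
        exact contract3 B e e' hx hy
          (fun a b x y => (σ (e a)) ⊗ₜ[K] (x ⊗ₜ[K] ((σ (e b)) ⊗ₜ[K] ⁅y, e' b⁆)))
          (fun a b y => lin_slot2 _ _ _)
          (fun a b x => lin_slot4_comp (lin_lie_left (e' b)) _ _ _)
          (fun a b x => ⁅x, e' a⁆) (fun a b y => ⁅e' a, y⁆)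
          (fun a b x y => hBinv x (e' a) y)
      _ = ∑ k, ∑ i, ∑ j,
          ((σ (e j)) ⊗ₜ[K] ((e i) ⊗ₜ[K] ((σ (e k)) ⊗ₜ[K] ⁅⁅e' j, e' i⁆, e' k⁆))) :=
        sum3_rot (fun a b c =>
          ((σ (e a)) ⊗ₜ[K] ((e c) ⊗ₜ[K] ((σ (e b)) ⊗ₜ[K] ⁅⁅e' a, e' c⁆, e' b⁆))))
      _ = ∑ k, ∑ i, ∑ j,
          ((e j) ⊗ₜ[K] ((e i) ⊗ₜ[K] ((σ (e k)) ⊗ₜ[K] ⁅⁅σ (e' j), e' i⁆, e' k⁆))) := by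
        exact contract3 B e e' hx hy
          (fun a b x y => x ⊗ₜ[K] ((e b) ⊗ₜ[K] ((σ (e a)) ⊗ₜ[K] ⁅⁅y, e' b⁆, e' a⁆)))
          (fun a b y => lin_slot1 _ _ _)
          (fun a b x => lin_slot4_comp (lin_lieL2 (e' b) (e' a)) _ _ _)
          (fun a b x => σ x) (fun a b y => σ y)
          (fun a b x y => hadjσ x y)
      _ = ∑ i, ∑ j, ∑ k,
          ((e j) ⊗ₜ[K] ((e i) ⊗ₜ[K] ((σ (e k)) ⊗ₜ[K] ⁅⁅σ (e' j), e' i⁆, e' k⁆))) :=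
        sum3_rot (fun a b c =>
          ((e c) ⊗ₜ[K] ((e b) ⊗ₜ[K] ((σ (e a)) ⊗ₜ[K] ⁅⁅σ (e' c), e' b⁆, e' a⁆))))
      _ = ∑ i, ∑ j, ∑ k,
          ((e j) ⊗ₜ[K] ((e i) ⊗ₜ[K] ((e k) ⊗ₜ[K] ⁅⁅σ (e' j), e' i⁆, σ (e' k)⁆))) := by
        exact contract3 B e e' hx hy
          (fun a b x y => (e b) ⊗ₜ[K] ((e a) ⊗ₜ[K] (x ⊗ₜ[K] ⁅⁅σ (e' b), e' a⁆, y⁆)))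
          (fun a b y => lin_slot3 _ _ _)
          (fun a b x => lin_slot4_comp (lin_lie_right ⁅σ (e' b), e' a⁆) _ _ _)
          (fun a b x => σ x) (fun a b y => σ y)
          (fun a b x y => hadjσ x y)
  exact hA.trans hB.symm

lemma sum3_swap12 {I M : Type*} [Fintype I] [AddCommMonoid M] (F : I → I → I → M) :
    ∑ i, ∑ j, ∑ k, F i j k = ∑ j, ∑ i, ∑ k, F i j k := Finset.sum_comm

lemma key2 (B : L →ₗ[K] L →ₗ[K] K) (e e' : I → L)
    (hx : ∀ x : L, x = ∑ j, B x (e' j) • e j)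
    (hy : ∀ y : L, y = ∑ j, B (e j) y • e' j)
    (σ : L →ₗ[K] L)
    (hσinv : ∀ x, σ (σ x) = x)
    (hσlie : ∀ x y, σ ⁅x, y⁆ = ⁅σ x, σ y⁆)
    (hBinv : ∀ x y z, B ⁅x, y⁆ z = B x ⁅y, z⁆)
    (hadjσ : ∀ x y, B (σ x) y = B x (σ y))
    (hadj2 : ∀ u x y, B ⁅u, σ x⁆ y = B x ⁅σ y, σ u⁆)
    (hadj3 : ∀ u x y, B ⁅σ u, σ x⁆ y = B x (-⁅u, σ y⁆)) :
    ∑ i, ∑ j, ∑ k, (⁅e i, σ (e j)⁆ ⊗ₜ[K] ((e' j) ⊗ₜ[K] ((σ (e k)) ⊗ₜ[K] ⁅e' i, e' k⁆)))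
      = ∑ i, ∑ j, ∑ k,
        ((σ (e j)) ⊗ₜ[K] (⁅e i, e' j⁆ ⊗ₜ[K] (⁅e' i, σ (e k)⁆ ⊗ₜ[K] (e' k)))) := by
  have hA : ∑ i, ∑ j, ∑ k,
        (⁅e i, σ (e j)⁆ ⊗ₜ[K] ((e' j) ⊗ₜ[K] ((σ (e k)) ⊗ₜ[K] ⁅e' i, e' k⁆)))
      = ∑ i, ∑ j, ∑ k,
        ((e j) ⊗ₜ[K] ((e i) ⊗ₜ[K] ((e k) ⊗ₜ[K] ⁅-⁅e' j, σ (e' i)⁆, σ (e' k)⁆))) := by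
    calc ∑ i, ∑ j, ∑ k,
          (⁅e i, σ (e j)⁆ ⊗ₜ[K] ((e' j) ⊗ₜ[K] ((σ (e k)) ⊗ₜ[K] ⁅e' i, e' k⁆)))
        = ∑ i, ∑ k, ∑ j,
          (⁅e i, σ (e j)⁆ ⊗ₜ[K] ((e' j) ⊗ₜ[K] ((σ (e k)) ⊗ₜ[K] ⁅e' i, e' k⁆))) :=
        sum3_swap23 _
      _ = ∑ i, ∑ k, ∑ j,
          ((e j) ⊗ₜ[K] (⁅σ (e' j), σ (e i)⁆ ⊗ₜ[K] ((σ (e k)) ⊗ₜ[K] ⁅e' i, e' k⁆))) := by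
        exact contract3 B e e' hx hy
          (fun a b x y => x ⊗ₜ[K] (y ⊗ₜ[K] ((σ (e b)) ⊗ₜ[K] ⁅e' a, e' b⁆)))
          (fun a b y => lin_slot1 _ _ _) (fun a b x => lin_slot2 _ _ _)
          (fun a b x => ⁅e a, σ x⁆) (fun a b y => ⁅σ y, σ (e a)⁆)
          (fun a b x y => hadj2 (e a) x y)
      _ = ∑ k, ∑ j, ∑ i,
          ((e j) ⊗ₜ[K] (⁅σ (e' j), σ (e i)⁆ ⊗ₜ[K] ((σ (e k)) ⊗ₜ[K] ⁅e' i, e' k⁆))) :=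
        sum3_rot (fun a b c =>
          ((e c) ⊗ₜ[K] (⁅σ (e' c), σ (e a)⁆ ⊗ₜ[K] ((σ (e b)) ⊗ₜ[K] ⁅e' a, e' b⁆))))
      _ = ∑ k, ∑ j, ∑ i,
          ((e j) ⊗ₜ[K] ((e i) ⊗ₜ[K] ((σ (e k)) ⊗ₜ[K] ⁅-⁅e' j, σ (e' i)⁆, e' k⁆))) := by
        exact contract3 B e e' hx hy
          (fun a b x y => (e b) ⊗ₜ[K] (x ⊗ₜ[K] ((σ (e a)) ⊗ₜ[K] ⁅y, e' a⁆)))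
          (fun a b y => lin_slot2 _ _ _)
          (fun a b x => lin_slot4_comp (lin_lie_left (e' a)) _ _ _)
          (fun a b x => ⁅σ (e' b), σ x⁆) (fun a b y => -⁅e' b, σ y⁆)
          (fun a b x y => hadj3 (e' b) x y)
      _ = ∑ j, ∑ i, ∑ k,
          ((e j) ⊗ₜ[K] ((e i) ⊗ₜ[K] ((σ (e k)) ⊗ₜ[K] ⁅-⁅e' j, σ (e' i)⁆, e' k⁆))) :=
        sum3_rot (fun a b c =>
          ((e b) ⊗ₜ[K] ((e c) ⊗ₜ[K] ((σ (e a)) ⊗ₜ[K] ⁅-⁅e' b, σ (e' c)⁆, e' a⁆))))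
      _ = ∑ j, ∑ i, ∑ k,
          ((e j) ⊗ₜ[K] ((e i) ⊗ₜ[K] ((e k) ⊗ₜ[K] ⁅-⁅e' j, σ (e' i)⁆, σ (e' k)⁆))) := by
        exact contract3 B e e' hx hy
          (fun a b x y => (e a) ⊗ₜ[K] ((e b) ⊗ₜ[K] (x ⊗ₜ[K] ⁅-⁅e' a, σ (e' b)⁆, y⁆)))
          (fun a b y => lin_slot3 _ _ _)
          (fun a b x => lin_slot4_comp (lin_lie_right (-⁅e' a, σ (e' b)⁆)) _ _ _)
          (fun a b x => σ x) (fun a b y => σ y)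
          (fun a b x y => hadjσ x y)
      _ = ∑ i, ∑ j, ∑ k,
          ((e j) ⊗ₜ[K] ((e i) ⊗ₜ[K] ((e k) ⊗ₜ[K] ⁅-⁅e' j, σ (e' i)⁆, σ (e' k)⁆))) :=
        sum3_swap12 (fun a b c =>
          ((e a) ⊗ₜ[K] ((e b) ⊗ₜ[K] ((e c) ⊗ₜ[K] ⁅-⁅e' a, σ (e' b)⁆, σ (e' c)⁆))))
  have hB : ∑ i, ∑ j, ∑ k,
        ((σ (e j)) ⊗ₜ[K] (⁅e i, e' j⁆ ⊗ₜ[K] (⁅e' i, σ (e k)⁆ ⊗ₜ[K] (e' k))))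
      = ∑ i, ∑ j, ∑ k,
        ((e j) ⊗ₜ[K] ((e i) ⊗ₜ[K] ((e k) ⊗ₜ[K] ⁅-⁅e' j, σ (e' i)⁆, σ (e' k)⁆))) := by
    calc ∑ i, ∑ j, ∑ k,
          ((σ (e j)) ⊗ₜ[K] (⁅e i, e' j⁆ ⊗ₜ[K] (⁅e' i, σ (e k)⁆ ⊗ₜ[K] (e' k))))
        = ∑ j, ∑ k, ∑ i,
          ((σ (e j)) ⊗ₜ[K] (⁅e i, e' j⁆ ⊗ₜ[K] (⁅e' i, σ (e k)⁆ ⊗ₜ[K] (e' k)))) :=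
        sum3_rot _
      _ = ∑ j, ∑ k, ∑ i,
          ((σ (e j)) ⊗ₜ[K] ((e i) ⊗ₜ[K] (⁅⁅e' j, e' i⁆, σ (e k)⁆ ⊗ₜ[K] (e' k)))) := by
        exact contract3 B e e' hx hy
          (fun a b x y => (σ (e a)) ⊗ₜ[K] (x ⊗ₜ[K] (⁅y, σ (e b)⁆ ⊗ₜ[K] (e' b))))
          (fun a b y => lin_slot2 _ _ _)
          (fun a b x => lin_slot3_comp (lin_lie_left (σ (e b))) _ _ _)
          (fun a b x => ⁅x, e' a⁆) (fun a b y => ⁅e' a, y⁆)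
          (fun a b x y => hBinv x (e' a) y)
      _ = ∑ j, ∑ i, ∑ k,
          ((σ (e j)) ⊗ₜ[K] ((e i) ⊗ₜ[K] (⁅⁅e' j, e' i⁆, σ (e k)⁆ ⊗ₜ[K] (e' k)))) :=
        sum3_swap23 (fun a b c =>
          ((σ (e a)) ⊗ₜ[K] ((e c) ⊗ₜ[K] (⁅⁅e' a, e' c⁆, σ (e b)⁆ ⊗ₜ[K] (e' b)))))
      _ = ∑ j, ∑ i, ∑ k,
          ((σ (e j)) ⊗ₜ[K] ((e i) ⊗ₜ[K] ((e k) ⊗ₜ[K] ⁅σ (e' k), σ ⁅e' j, e' i⁆⁆))) := by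
        exact contract3 B e e' hx hy
          (fun a b x y => (σ (e a)) ⊗ₜ[K] ((e b) ⊗ₜ[K] (x ⊗ₜ[K] y)))
          (fun a b y => lin_slot3 _ _ _) (fun a b x => lin_slot4 _ _ _)
          (fun a b x => ⁅⁅e' a, e' b⁆, σ x⁆) (fun a b y => ⁅σ y, σ ⁅e' a, e' b⁆⁆)
          (fun a b x y => hadj2 ⁅e' a, e' b⁆ x y)
      _ = ∑ i, ∑ k, ∑ j,
          ((σ (e j)) ⊗ₜ[K] ((e i) ⊗ₜ[K] ((e k) ⊗ₜ[K] ⁅σ (e' k), σ ⁅e' j, e' i⁆⁆))) :=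
        sum3_rot (fun a b c =>
          ((σ (e a)) ⊗ₜ[K] ((e b) ⊗ₜ[K] ((e c) ⊗ₜ[K] ⁅σ (e' c), σ ⁅e' a, e' b⁆⁆))))
      _ = ∑ i, ∑ k, ∑ j,
          ((e j) ⊗ₜ[K] ((e i) ⊗ₜ[K] ((e k) ⊗ₜ[K] ⁅σ (e' k), σ ⁅σ (e' j), e' i⁆⁆))) := by
        exact contract3 B e e' hx hy
          (fun a b x y => x ⊗ₜ[K] ((e a) ⊗ₜ[K] ((e b) ⊗ₜ[K] ⁅σ (e' b), σ ⁅y, e' a⁆⁆)))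
          (fun a b y => lin_slot1 _ _ _)
          (fun a b x => lin_slot4_comp (lin_mix σ (σ (e' b)) (e' a)) _ _ _)
          (fun a b x => σ x) (fun a b y => σ y)
          (fun a b x y => hadjσ x y)
      _ = ∑ i, ∑ j, ∑ k,
          ((e j) ⊗ₜ[K] ((e i) ⊗ₜ[K] ((e k) ⊗ₜ[K] ⁅σ (e' k), σ ⁅σ (e' j), e' i⁆⁆))) :=
        sum3_swap23 (fun a b c =>
          ((e c) ⊗ₜ[K] ((e a) ⊗ₜ[K] ((e b) ⊗ₜ[K] ⁅σ (e' b), σ ⁅σ (e' c), e' a⁆⁆))))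
      _ = ∑ i, ∑ j, ∑ k,
          ((e j) ⊗ₜ[K] ((e i) ⊗ₜ[K] ((e k) ⊗ₜ[K] ⁅-⁅e' j, σ (e' i)⁆, σ (e' k)⁆))) := by
        refine Finset.sum_congr rfl fun i _ => Finset.sum_congr rfl fun j _ =>
          Finset.sum_congr rfl fun k _ => ?_
        rw [hσlie, hσinv, neg_lie, lie_skew]
  exact hA.trans hB.symm

end Key

section UEAmapSec
attribute [local instance] LieRing.ofAssociativeRing

noncomputable def UEAmap4 (K L : Type*) [Field K] [LieRing L] [LieAlgebra K L] :
    (L ⊗[K] (L ⊗[K] (L ⊗[K] L))) →ₗ[K]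
      (UniversalEnvelopingAlgebra K L ⊗[K] (UniversalEnvelopingAlgebra K L ⊗[K]
        (UniversalEnvelopingAlgebra K L ⊗[K] UniversalEnvelopingAlgebra K L))) :=
  TensorProduct.map (UniversalEnvelopingAlgebra.ι K).toLinearMap
    (TensorProduct.map (UniversalEnvelopingAlgebra.ι K).toLinearMap
      (TensorProduct.map (UniversalEnvelopingAlgebra.ι K).toLinearMap
        (UniversalEnvelopingAlgebra.ι K).toLinearMap))

lemma UEAmap4_tmul {K L : Type*} [Field K] [LieRing L] [LieAlgebra K L] (a b c d : L) :
    UniversalEnvelopingAlgebra.ι K a ⊗ₜ[K] (UniversalEnvelopingAlgebra.ι K b ⊗ₜ[K]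
      (UniversalEnvelopingAlgebra.ι K c ⊗ₜ[K] UniversalEnvelopingAlgebra.ι K d))
    = UEAmap4 K L (a ⊗ₜ[K] (b ⊗ₜ[K] (c ⊗ₜ[K] d))) := by
  simp [UEAmap4, TensorProduct.map_tmul]

end UEAmapSec


set_option maxHeartbeats 2000000
set_option synthInstance.maxHeartbeats 400000

/-- In `U(g)^{⊗4}`: `[[C₁₃ − C₂₄, σ̂₁₂], σ̂₃₄] = 0` and `[[C₁₄ − C₂₃, σ̂₁₂], σ̂₃₄] = 0`. -/
theorem four_fold_identity_Csigma
    {K L I : Type*} [Field K] [CharZero K] [LieRing L] [LieAlgebra K L]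
    [Module.Finite K L] [Fintype I] [DecidableEq I]
    (B : LinearMap.BilinForm K L)
    (hBsymm : ∀ x y, B x y = B y x)
    (hBinv : ∀ x y z, B ⁅x, y⁆ z = B x ⁅y, z⁆)
    (hBnd : B.Nondegenerate)
    (e : Module.Basis I K L) (e' : I → L)
    (hdual : ∀ i j, B (e i) (e' j) = if i = j then 1 else 0)
    (σ : L →ₗ[K] L)
    (hσinv : ∀ x, σ (σ x) = x)
    (hσlie : ∀ x y, σ ⁅x, y⁆ = ⁅σ x, σ y⁆)
    (hσB : ∀ x y, B (σ x) (σ y) = B x y) :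
    ⁅⁅tensor4_13 K (⇑e) e' - tensor4_24 K (⇑e) e',
        tensor4_12 K (fun i => σ (e i)) e'⁆, tensor4_34 K (fun i => σ (e i)) e'⁆ = 0 ∧
    ⁅⁅tensor4_14 K (⇑e) e' - tensor4_23 K (⇑e) e',
        tensor4_12 K (fun i => σ (e i)) e'⁆, tensor4_34 K (fun i => σ (e i)) e'⁆ = 0 := by
  classical
  letI : LieRing (UniversalEnvelopingAlgebra K L) := LieRing.ofAssociativeRing
  have hadjσ : ∀ x y, B (σ x) y = B x (σ y) := by
    intro x y
    calc B (σ x) y = B (σ x) (σ (σ y)) := by rw [hσinv]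
      _ = B x (σ y) := hσB x (σ y)
  have hadj2 : ∀ u x y, B ⁅u, σ x⁆ y = B x ⁅σ y, σ u⁆ := by
    intro u x y
    rw [hBinv, ← hσB u ⁅σ x, y⁆, hσlie, hσinv, hBsymm, hBinv]
  have hadj3 : ∀ u x y, B ⁅σ u, σ x⁆ y = B x (-⁅u, σ y⁆) := by
    intro u x y
    calc B ⁅σ u, σ x⁆ y = B (σ ⁅u, x⁆) y := by rw [hσlie]
      _ = B ⁅u, x⁆ (σ y) := hadjσ _ _
      _ = B u ⁅x, σ y⁆ := hBinv _ _ _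
      _ = B u (-⁅σ y, x⁆) := by rw [lie_skew]
      _ = -B u ⁅σ y, x⁆ := map_neg _ _
      _ = -B ⁅u, σ y⁆ x := by rw [hBinv]
      _ = -B x ⁅u, σ y⁆ := by rw [hBsymm]
      _ = B x (-⁅u, σ y⁆) := (map_neg _ _).symm
  have hrepr : ∀ (x : L) (j : I), B x (e' j) = e.repr x j := by
    intro x j
    conv_lhs => rw [← e.sum_repr x]
    simp [map_sum, LinearMap.sum_apply, map_smul, LinearMap.smul_apply, hdual,
      smul_eq_mul, mul_ite, -Module.Basis.sum_repr]
  have hx : ∀ x : L, x = ∑ j, B x (e' j) • e j := by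
    intro x
    conv_lhs => rw [← e.sum_repr x]
    exact Finset.sum_congr rfl fun j _ => by rw [hrepr]
  have hy : ∀ y : L, y = ∑ j, B (e j) y • e' j := by
    intro y
    have h0 : ∀ k, B (e k) (y - ∑ j, B (e j) y • e' j) = 0 := by
      intro k
      simp [map_sub, map_sum, map_smul, hdual, smul_eq_mul, mul_ite]
    have h1 : ∀ x, B x (y - ∑ j, B (e j) y • e' j) = 0 := by
      intro x
      conv_lhs => rw [← e.sum_repr x]
      simp [map_sum, LinearMap.sum_apply, map_smul, LinearMap.smul_apply, h0, -Module.Basis.sum_repr]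
    exact sub_eq_zero.mp (hBnd.1 _ fun n => by rw [hBsymm]; exact h1 n)
  constructor
  · have e1 : ⁅tensor4_13 K (⇑e) e' - tensor4_24 K (⇑e) e',
          tensor4_12 K (fun i => σ (e i)) e'⁆
        = (∑ i, ∑ j, (UniversalEnvelopingAlgebra.ι K ⁅e i, σ (e j)⁆ ⊗ₜ[K]
            (UniversalEnvelopingAlgebra.ι K (e' j) ⊗ₜ[K]
              (UniversalEnvelopingAlgebra.ι K (e' i) ⊗ₜ[K]
                (1 : UniversalEnvelopingAlgebra K L)))))
          - ∑ i, ∑ j, (UniversalEnvelopingAlgebra.ι K (σ (e j)) ⊗ₜ[K]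
            (UniversalEnvelopingAlgebra.ι K ⁅e i, e' j⁆ ⊗ₜ[K]
              ((1 : UniversalEnvelopingAlgebra K L) ⊗ₜ[K]
                UniversalEnvelopingAlgebra.ι K (e' i)))) := by
      rw [sub_lie'']
      congr 1
      · unfold tensor4_13 tensor4_12
        rw [sum_lie']
        refine Finset.sum_congr rfl fun i _ => ?_
        rw [lie_sum']
        refine Finset.sum_congr rfl fun j _ => ?_
        rw [s13_12, ← LieHom.map_lie]
      · unfold tensor4_24 tensor4_12
        rw [sum_lie']
        refine Finset.sum_congr rfl fun i _ => ?_
        rw [lie_sum']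
        refine Finset.sum_congr rfl fun j _ => ?_
        rw [s24_12, ← LieHom.map_lie]
    rw [e1, sub_lie'']
    have e2 : ⁅(∑ i, ∑ j, (UniversalEnvelopingAlgebra.ι K ⁅e i, σ (e j)⁆ ⊗ₜ[K]
            (UniversalEnvelopingAlgebra.ι K (e' j) ⊗ₜ[K]
              (UniversalEnvelopingAlgebra.ι K (e' i) ⊗ₜ[K]
                (1 : UniversalEnvelopingAlgebra K L))))),
          tensor4_34 K (fun i => σ (e i)) e'⁆
        = ∑ i, ∑ j, ∑ k, (UniversalEnvelopingAlgebra.ι K ⁅e i, σ (e j)⁆ ⊗ₜ[K]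
            (UniversalEnvelopingAlgebra.ι K (e' j) ⊗ₜ[K]
              (UniversalEnvelopingAlgebra.ι K ⁅e' i, σ (e k)⁆ ⊗ₜ[K]
                UniversalEnvelopingAlgebra.ι K (e' k)))) := by
      unfold tensor4_34
      rw [sum_lie']
      refine Finset.sum_congr rfl fun i _ => ?_
      rw [sum_lie']
      refine Finset.sum_congr rfl fun j _ => ?_
      rw [lie_sum']
      refine Finset.sum_congr rfl fun k _ => ?_
      rw [sx3_34, ← LieHom.map_lie]
    have e3 : ⁅(∑ i, ∑ j, (UniversalEnvelopingAlgebra.ι K (σ (e j)) ⊗ₜ[K]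
            (UniversalEnvelopingAlgebra.ι K ⁅e i, e' j⁆ ⊗ₜ[K]
              ((1 : UniversalEnvelopingAlgebra K L) ⊗ₜ[K]
                UniversalEnvelopingAlgebra.ι K (e' i))))),
          tensor4_34 K (fun i => σ (e i)) e'⁆
        = ∑ i, ∑ j, ∑ k, (UniversalEnvelopingAlgebra.ι K (σ (e j)) ⊗ₜ[K]
            (UniversalEnvelopingAlgebra.ι K ⁅e i, e' j⁆ ⊗ₜ[K]
              (UniversalEnvelopingAlgebra.ι K (σ (e k)) ⊗ₜ[K]
                UniversalEnvelopingAlgebra.ι K ⁅e' i, e' k⁆))) := by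
      unfold tensor4_34
      rw [sum_lie']
      refine Finset.sum_congr rfl fun i _ => ?_
      rw [sum_lie']
      refine Finset.sum_congr rfl fun j _ => ?_
      rw [lie_sum']
      refine Finset.sum_congr rfl fun k _ => ?_
      rw [sx4_34, ← LieHom.map_lie]
    rw [e2, e3]
    simp only [UEAmap4_tmul, ← map_sum]
    rw [key1 B (⇑e) e' hx hy σ hσinv hσlie hBinv hadjσ hadj2 hadj3]
    exact sub_self _
  · have e1 : ⁅tensor4_14 K (⇑e) e' - tensor4_23 K (⇑e) e',
          tensor4_12 K (fun i => σ (e i)) e'⁆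
        = (∑ i, ∑ j, (UniversalEnvelopingAlgebra.ι K ⁅e i, σ (e j)⁆ ⊗ₜ[K]
            (UniversalEnvelopingAlgebra.ι K (e' j) ⊗ₜ[K]
              ((1 : UniversalEnvelopingAlgebra K L) ⊗ₜ[K]
                UniversalEnvelopingAlgebra.ι K (e' i)))))
          - ∑ i, ∑ j, (UniversalEnvelopingAlgebra.ι K (σ (e j)) ⊗ₜ[K]
            (UniversalEnvelopingAlgebra.ι K ⁅e i, e' j⁆ ⊗ₜ[K]
              (UniversalEnvelopingAlgebra.ι K (e' i) ⊗ₜ[K]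
                (1 : UniversalEnvelopingAlgebra K L)))) := by
      rw [sub_lie'']
      congr 1
      · unfold tensor4_14 tensor4_12
        rw [sum_lie']
        refine Finset.sum_congr rfl fun i _ => ?_
        rw [lie_sum']
        refine Finset.sum_congr rfl fun j _ => ?_
        rw [s14_12, ← LieHom.map_lie]
      · unfold tensor4_23 tensor4_12
        rw [sum_lie']
        refine Finset.sum_congr rfl fun i _ => ?_
        rw [lie_sum']
        refine Finset.sum_congr rfl fun j _ => ?_
        rw [s23_12, ← LieHom.map_lie]
    rw [e1, sub_lie'']
    have e2 : ⁅(∑ i, ∑ j, (UniversalEnvelopingAlgebra.ι K ⁅e i, σ (e j)⁆ ⊗ₜ[K]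
            (UniversalEnvelopingAlgebra.ι K (e' j) ⊗ₜ[K]
              ((1 : UniversalEnvelopingAlgebra K L) ⊗ₜ[K]
                UniversalEnvelopingAlgebra.ι K (e' i))))),
          tensor4_34 K (fun i => σ (e i)) e'⁆
        = ∑ i, ∑ j, ∑ k, (UniversalEnvelopingAlgebra.ι K ⁅e i, σ (e j)⁆ ⊗ₜ[K]
            (UniversalEnvelopingAlgebra.ι K (e' j) ⊗ₜ[K]
              (UniversalEnvelopingAlgebra.ι K (σ (e k)) ⊗ₜ[K]
                UniversalEnvelopingAlgebra.ι K ⁅e' i, e' k⁆))) := by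
      unfold tensor4_34
      rw [sum_lie']
      refine Finset.sum_congr rfl fun i _ => ?_
      rw [sum_lie']
      refine Finset.sum_congr rfl fun j _ => ?_
      rw [lie_sum']
      refine Finset.sum_congr rfl fun k _ => ?_
      rw [sx4_34, ← LieHom.map_lie]
    have e3 : ⁅(∑ i, ∑ j, (UniversalEnvelopingAlgebra.ι K (σ (e j)) ⊗ₜ[K]
            (UniversalEnvelopingAlgebra.ι K ⁅e i, e' j⁆ ⊗ₜ[K]
              (UniversalEnvelopingAlgebra.ι K (e' i) ⊗ₜ[K]
                (1 : UniversalEnvelopingAlgebra K L))))),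
          tensor4_34 K (fun i => σ (e i)) e'⁆
        = ∑ i, ∑ j, ∑ k, (UniversalEnvelopingAlgebra.ι K (σ (e j)) ⊗ₜ[K]
            (UniversalEnvelopingAlgebra.ι K ⁅e i, e' j⁆ ⊗ₜ[K]
              (UniversalEnvelopingAlgebra.ι K ⁅e' i, σ (e k)⁆ ⊗ₜ[K]
                UniversalEnvelopingAlgebra.ι K (e' k)))) := by
      unfold tensor4_34
      rw [sum_lie']
      refine Finset.sum_congr rfl fun i _ => ?_
      rw [sum_lie']
      refine Finset.sum_congr rfl fun j _ => ?_
      rw [lie_sum']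
      refine Finset.sum_congr rfl fun k _ => ?_
      rw [sx3_34, ← LieHom.map_lie]
    rw [e2, e3]
    simp only [UEAmap4_tmul, ← map_sum]
    rw [key2 B (⇑e) e' hx hy σ hσinv hσlie hBinv hadjσ hadj2 hadj3]
    exact sub_self _
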